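/- Let 1 ≤ k < n be integers and let x_1,…,x_n be positive integers with σ_k(x_1,…,x_n) = σ_n(x_1,…,x_n). Then (x_1·x_2·…·x_n)^(n−k) ≥ C(n,k)^n, where C(n,k) is the binomial coefficient; equivalently, σ_n(x_1,…,x_n) ≥ C(n,k)^(n/(n−k)). -/

import Mathlib

open Finset

/-- AM-GM for naturals: `m^m * ∏ f ≤ (∑ f)^m` where `m = #s`. -/
lemma amgm_nat {ι : Type*} (s : Finset ι) (f : ι → ℕ) :
    s.card ^ s.card * ∏ i ∈ s, f i ≤ (∑ i ∈ s, f i) ^ s.card := by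
  rcases s.eq_empty_or_nonempty with rfl | hs
  · simp
  have hc : (0 : ℝ) < s.card := by exact_mod_cast Finset.card_pos.mpr hs
  have key := Real.geom_mean_le_arith_mean s (fun _ => (1 : ℝ)) (fun i => (f i : ℝ))
    (fun _ _ => zero_le_one) (by simpa using hc) (fun i _ => by positivity)
  simp only [Real.rpow_one, Finset.sum_const, nsmul_eq_mul, mul_one, one_mul] at key
  -- key : (∏ f)^(card⁻¹) ≤ (∑ f) / card
  have h2 : ((∏ i ∈ s, f i : ℕ) : ℝ) ≤ ((∑ i ∈ s, f i : ℕ) : ℝ) ^ (s.card : ℕ) / (s.card : ℝ) ^ (s.card : ℕ) := by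
    have := pow_le_pow_left₀ (by positivity) key s.card
    rw [← Real.rpow_natCast (_ ^ _) s.card, ← Real.rpow_mul (by positivity),
      inv_mul_cancel₀ (ne_of_gt hc), Real.rpow_one, div_pow] at this
    push_cast
    simpa using this
  rw [le_div_iff₀ (by positivity), mul_comm] at h2
  exact_mod_cast h2

/-- each element lies in `C(n-1, k-1)` of the `k`-subsets -/
lemma card_mem_subsets (n k : ℕ) (hk : 1 ≤ k) (i : Fin n) :
    ((Finset.univ.powersetCard k).filter (fun s => i ∈ s)).card = (n-1).choose (k-1) := by
  have : ((Finset.univ.powersetCard k).filter (fun s => i ∈ s)).card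
      = ((Finset.univ.erase i).powersetCard (k-1)).card := by
    apply Finset.card_bij (fun s _ => s.erase i)
    · rintro s hs
      simp only [mem_filter, Finset.mem_powersetCard_univ] at hs
      rw [Finset.mem_powersetCard]
      refine ⟨fun j hj => ?_, ?_⟩
      · simp only [Finset.mem_erase] at hj ⊢
        exact ⟨hj.1, Finset.mem_univ _⟩
      · rw [Finset.card_erase_of_mem hs.2, hs.1]
    · rintro s hs t ht hst
      simp only [mem_filter] at hs ht
      rw [← Finset.insert_erase hs.2, ← Finset.insert_erase ht.2, hst]
    · rintro s hs
      rw [Finset.mem_powersetCard] at hs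
      refine ⟨insert i s, ?_, ?_⟩
      · simp only [mem_filter, Finset.mem_powersetCard_univ]
        have hi : i ∉ s := fun h => by simpa using hs.1 h
        refine ⟨?_, Finset.mem_insert_self _ _⟩
        rw [Finset.card_insert_of_notMem hi, hs.2]
        omega
      · rw [Finset.erase_insert (fun h => by simpa using hs.1 h)]
  rw [this, Finset.card_powersetCard, Finset.card_erase_of_mem (Finset.mem_univ _),
    Finset.card_univ, Fintype.card_fin]

lemma prod_prod_powersetCard (n k : ℕ) (hk : 1 ≤ k) (x : Fin n → ℕ) :
    ∏ s ∈ Finset.univ.powersetCard k, ∏ i ∈ s, x i = (∏ i, x i) ^ ((n-1).choose (k-1)) := by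
  rw [← Finset.prod_pow]
  rw [Finset.prod_comm' (t' := Finset.univ)
    (s' := fun i => (Finset.univ.powersetCard k).filter (fun s => i ∈ s))]
  · refine Finset.prod_congr rfl fun i _ => ?_
    rw [Finset.prod_const, card_mem_subsets n k hk i]
  · intro s i
    simp [Finset.mem_filter, and_comm]

/-- The `k`-th elementary symmetric polynomial of `x 0, …, x (n-1)`. -/
def esymm (n k : ℕ) (x : Fin n → ℕ) : ℕ :=
  ∑ s ∈ Finset.univ.powersetCard k, ∏ i ∈ s, x i

/-- If `1 ≤ k < n` and positive integers `x_1,…,x_n` satisfy `σ_k = σ_n`,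
then `(x_1 ⋯ x_n)^(n-k) ≥ C(n,k)^n`. -/
theorem stmt3 (n k : ℕ) (hk : 1 ≤ k) (hkn : k < n) (x : Fin n → ℕ)
    (hpos : ∀ i, 0 < x i) (h : esymm n k x = esymm n n x) :
    (n.choose k) ^ n ≤ (∏ i, x i) ^ (n - k) := by
  set P := ∏ i, x i with hP
  have hPpos : 0 < P := Finset.prod_pos fun i _ => hpos i
  have hnn : esymm n n x = P := by
    unfold esymm
    rw [show (Finset.univ : Finset (Fin n)).powersetCard n
      = Finset.univ.powersetCard (Finset.univ : Finset (Fin n)).card by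
        rw [Finset.card_univ, Fintype.card_fin],
      Finset.powersetCard_self]
    simp
    rfl
  set m := n.choose k with hm
  have hcard : (Finset.univ.powersetCard k : Finset (Finset (Fin n))).card = m := by
    rw [Finset.card_powersetCard, Finset.card_univ, Fintype.card_fin]
  -- AM-GM
  have amgm := amgm_nat (Finset.univ.powersetCard k) (fun s => ∏ i ∈ s, x i)
  rw [hcard, prod_prod_powersetCard n k hk x, ← hP] at amgm
  have hsum : ∑ s ∈ Finset.univ.powersetCard k, ∏ i ∈ s, x i = P := by
    rw [← hnn]; exact h
  rw [hsum] at amgm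
  -- Pascal: m = C(n-1,k-1) + C(n-1,k)
  have hpascal : m = (n-1).choose (k-1) + (n-1).choose k := by
    have h1 := Nat.choose_succ_succ (n-1) (k-1)
    rw [show (n-1).succ = n by omega, show (k-1).succ = k by omega] at h1
    exact h1
  have key : m ^ m ≤ P ^ ((n-1).choose k) := by
    have : m ^ m * P ^ ((n-1).choose (k-1)) ≤ P ^ ((n-1).choose k) * P ^ ((n-1).choose (k-1)) := by
      rw [← pow_add, Nat.add_comm, ← hpascal]
      exact amgm
    exact Nat.le_of_mul_le_mul_right this (pow_pos hPpos _)
  -- identity: (n-1).choose k * n = m * (n - k)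
  have hid : (n-1).choose k * n = m * (n - k) := by
    have h1 := Nat.choose_succ_right_eq n k   -- choose n (k+1) * (k+1) = choose n k * (n-k)
    have h2 := Nat.add_one_mul_choose_eq (n-1) k -- succ (n-1) * choose (n-1) k = choose n (k+1) * (k+1)
    rw [show n - 1 + 1 = n by omega] at h2
    rw [Nat.mul_comm, h2, h1, hm]
  have final : (m ^ n) ^ m ≤ (P ^ (n - k)) ^ m := by
    calc (m ^ n) ^ m = (m ^ m) ^ n := by rw [← pow_mul, ← pow_mul, Nat.mul_comm]
    _ ≤ (P ^ ((n-1).choose k)) ^ n := Nat.pow_le_pow_left key n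
    _ = (P ^ (n - k)) ^ m := by rw [← pow_mul, ← pow_mul, hid, Nat.mul_comm]
  have hm0 : m ≠ 0 := Nat.choose_pos hkn.le |>.ne'
  exact (Nat.pow_le_pow_iff_left hm0).mp final
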